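/- Let l₁, …, l_k be i.i.d. samples (k ≥ 2), l̄ their empirical mean, σ² their unbiased empirical variance. For any m > 0 and any c > 0, the following pointwise inequality holds on the event {σ ≠ 0}: k⁻¹ Σᵢ 𝟙(mσ ≤ l̄ - lᵢ) ≤ (k - 1 + k c²)/(k (m + c)²), and the right-hand side is minimized over c > 0 at c = (k-1)/(k m), where it equals (k-1)/(k m² + k - 1). -/

import Mathlib

/-- Key deterministic inequality in the empirical Cantelli bound proof: on the event
`σ ≠ 0`, the empirical tail frequency is bounded by `(k - 1 + k c²)/(k (m + c)²)`,
which is minimized over `c > 0` at `c = (k-1)/(k m)`, with value `(k-1)/(k m² + k - 1)`. -/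
theorem stmt_6 (k : ℕ) (hk : 2 ≤ k) (l : Fin k → ℝ)
    (lbar : ℝ) (hlbar : lbar = (k : ℝ)⁻¹ * ∑ i, l i)
    (σv : ℝ)
    (hσv : σv = Real.sqrt (((k : ℝ) - 1)⁻¹ * ∑ i, (l i - lbar) ^ 2))
    (hσ : σv ≠ 0) (m c : ℝ) (hm : 0 < m) (hc : 0 < c) :
    ((k : ℝ)⁻¹ * ∑ i, (if m * σv ≤ lbar - l i then (1 : ℝ) else 0)
      ≤ ((k : ℝ) - 1 + k * c ^ 2) / (k * (m + c) ^ 2)) ∧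
    (((k : ℝ) - 1 + k * (((k : ℝ) - 1) / (k * m)) ^ 2) /
        (k * (m + ((k : ℝ) - 1) / (k * m)) ^ 2)
      ≤ ((k : ℝ) - 1 + k * c ^ 2) / (k * (m + c) ^ 2)) ∧
    (((k : ℝ) - 1 + k * (((k : ℝ) - 1) / (k * m)) ^ 2) /
        (k * (m + ((k : ℝ) - 1) / (k * m)) ^ 2)
      = ((k : ℝ) - 1) / (k * m ^ 2 + k - 1)) := by
  have hk2 : (2 : ℝ) ≤ (k : ℝ) := by exact_mod_cast hk
  have hkpos : (0 : ℝ) < (k : ℝ) := by linarith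
  have hkm1 : (0 : ℝ) < (k : ℝ) - 1 := by linarith
  have hmc : 0 < m + c := by linarith
  have hσpos : 0 < σv := by
    rcases lt_or_eq_of_le (hσv ▸ Real.sqrt_nonneg _) with h | h
    · exact hσv ▸ h
    · exact absurd h.symm (hσv ▸ hσ)
  have hsum0 : ∑ i, (lbar - l i) = 0 := by
    rw [Finset.sum_sub_distrib, Finset.sum_const, Finset.card_univ, Fintype.card_fin, hlbar]
    field_simp
    rw [nsmul_eq_mul, mul_div_assoc', mul_div_cancel_left₀ _ hkpos.ne', sub_self]
  have hσsq : σv ^ 2 = ((k : ℝ) - 1)⁻¹ * ∑ i, (l i - lbar) ^ 2 := by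
    rw [hσv, Real.sq_sqrt]
    positivity
  have hsumsq : ∑ i, (lbar - l i) ^ 2 = ((k : ℝ) - 1) * σv ^ 2 := by
    rw [hσsq, ← mul_assoc, mul_inv_cancel₀ (ne_of_gt hkm1), one_mul]
    exact Finset.sum_congr rfl fun i _ => by ring
  -- main sum identity
  have hsum2 : ∑ i, (lbar - l i + c * σv) ^ 2 = ((k : ℝ) - 1 + k * c ^ 2) * σv ^ 2 := by
    have h : ∀ i ∈ Finset.univ, (lbar - l i + c * σv) ^ 2
        = (lbar - l i) ^ 2 + (2 * c * σv) * (lbar - l i) + c ^ 2 * σv ^ 2 :=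
      fun i _ => by ring
    rw [Finset.sum_congr rfl h, Finset.sum_add_distrib, Finset.sum_add_distrib,
      ← Finset.mul_sum, hsum0, hsumsq, Finset.sum_const, Finset.card_univ, Fintype.card_fin]
    push_cast
    ring
  have part1 : (k : ℝ)⁻¹ * ∑ i, (if m * σv ≤ lbar - l i then (1 : ℝ) else 0)
      ≤ ((k : ℝ) - 1 + k * c ^ 2) / (k * (m + c) ^ 2) := by
    have point : ∀ i ∈ Finset.univ, (if m * σv ≤ lbar - l i then (1 : ℝ) else 0)
        ≤ (lbar - l i + c * σv) ^ 2 / ((m + c) ^ 2 * σv ^ 2) := by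
      intro i _
      by_cases h : m * σv ≤ lbar - l i
      · rw [if_pos h, le_div_iff₀ (by positivity), one_mul]
        have h1 : (m + c) * σv ≤ lbar - l i + c * σv := by nlinarith
        nlinarith [mul_pos hmc hσpos]
      · rw [if_neg h]
        positivity
    have hsle := Finset.sum_le_sum point
    have h2 : ∑ i, (lbar - l i + c * σv) ^ 2 / ((m + c) ^ 2 * σv ^ 2)
        = ((k : ℝ) - 1 + k * c ^ 2) / (m + c) ^ 2 := by
      rw [← Finset.sum_div, hsum2]
      field_simp
    calc (k : ℝ)⁻¹ * ∑ i, (if m * σv ≤ lbar - l i then (1 : ℝ) else 0)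
        ≤ (k : ℝ)⁻¹ * (((k : ℝ) - 1 + k * c ^ 2) / (m + c) ^ 2) := by
          apply mul_le_mul_of_nonneg_left _ (by positivity)
          rw [← h2]; exact hsle
      _ = ((k : ℝ) - 1 + k * c ^ 2) / (k * (m + c) ^ 2) := by
          field_simp
  have part3 : ((k : ℝ) - 1 + k * (((k : ℝ) - 1) / (k * m)) ^ 2) /
        (k * (m + ((k : ℝ) - 1) / (k * m)) ^ 2)
      = ((k : ℝ) - 1) / (k * m ^ 2 + k - 1) := by
    have hd : (0 : ℝ) < k * m ^ 2 + k - 1 := by nlinarith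
    have hnum : (0 : ℝ) < m + ((k : ℝ) - 1) / (k * m) := by positivity
    have hd' : (k : ℝ) * m ^ 2 + k - 1 ≠ 0 := hd.ne'
    rw [div_eq_div_iff (by positivity) hd']
    field_simp
    ring
  refine ⟨part1, ?_, part3⟩
  rw [part3]
  rw [div_le_div_iff₀ (by nlinarith) (by positivity)]
  nlinarith [sq_nonneg ((k : ℝ) * m * c - ((k : ℝ) - 1)), sq_nonneg c]
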